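/- arXiv:1208.2408 — 2 statements merged into one kernel-verified Lean document; each statement's English description precedes it below -/
import Mathlib

section
/- Let $V$ and $W$ be matrix regular operator spaces and let $z = \alpha (v \otimes w) \beta^*$ with $v \in M_k(V)$, $w \in M_l(W)$, $\alpha, \beta \in M_{n,kl}$. Then there exist elements $u_1, u_2 \in M_n(V \otimes_\Delta W)_+$ such that $\begin{pmatrix} u_1 & z \\ z^* & u_2 \end{pmatrix} \in M_{2n}(V \otimes_\Delta W)_+$. -/
open scoped TensorProduct ComplexConjugate ComplexOrder
open Matrix

noncomputable section

/-- Operator norm of a rectangular complex matrix (as an operator between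
Euclidean spaces). -/
def opN {m n : Type} [Fintype m] [Fintype n] [DecidableEq m] [DecidableEq n]
    (α : Matrix m n ℂ) : ℝ :=
  ‖LinearMap.toContinuousLinearMap (Matrix.toEuclideanLin α)‖

section ops

variable {V W : Type} [AddCommGroup V] [Module ℂ V]

/-- Left action of a scalar matrix on a `V`-valued matrix. -/
def mulL {ι κ κ' : Type} [Fintype κ] (α : Matrix ι κ ℂ) (v : Matrix κ κ' V) :
    Matrix ι κ' V := Matrix.of fun i j => ∑ p, α i p • v p j

/-- Right action of a scalar matrix on a `V`-valued matrix. -/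
def mulR {ι κ κ' : Type} [Fintype κ] (v : Matrix ι κ V) (β : Matrix κ κ' ℂ) :
    Matrix ι κ' V := Matrix.of fun i j => ∑ p, β p j • v i p

/-- `trip α v β = α * v * β`. -/
def trip {ι κ κ' ι' : Type} [Fintype κ] [Fintype κ'] (α : Matrix ι κ ℂ)
    (v : Matrix κ κ' V) (β : Matrix κ' ι' ℂ) : Matrix ι ι' V :=
  mulR (mulL α v) β

/-- Entrywise application of a linear map to a matrix. -/
def mapMat {ι ι' : Type} [AddCommGroup W] [Module ℂ W] (T : V →ₗ[ℂ] W)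
    (z : Matrix ι ι' V) : Matrix ι ι' W := Matrix.of fun i j => T (z i j)

/-- Amplification of a map into a matrix algebra. -/
def ampS {κ ι : Type} (T : V →ₗ[ℂ] Matrix κ κ ℂ) (z : Matrix ι ι V) :
    Matrix (ι × κ) (ι × κ) ℂ := Matrix.of fun a b => T (z a.1 b.1) a.2 b.2

end ops

/-- A matrix regular operator space: an operator space which is matrix ordered
with closed proper-compatible cones, satisfying Ruan's axioms and the two
regularity conditions.  Matrix levels are indexed by arbitrary finite index
types. -/
structure MROS (V : Type) [AddCommGroup V] [Module ℂ V] [StarAddMonoid V]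
    [StarModule ℂ V] where
  N : ∀ (ι : Type) [Fintype ι] [DecidableEq ι], Matrix ι ι V → ℝ
  pos : ∀ (ι : Type) [Fintype ι] [DecidableEq ι], Set (Matrix ι ι V)
  N_zero : ∀ (ι : Type) [Fintype ι] [DecidableEq ι] (v : Matrix ι ι V),
    N ι v = 0 ↔ v = 0
  N_add : ∀ (ι : Type) [Fintype ι] [DecidableEq ι] (v w : Matrix ι ι V),
    N ι (v + w) ≤ N ι v + N ι w
  N_smul : ∀ (ι : Type) [Fintype ι] [DecidableEq ι] (c : ℂ) (v : Matrix ι ι V),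
    N ι (c • v) = ‖c‖ * N ι v
  N_star : ∀ (ι : Type) [Fintype ι] [DecidableEq ι] (v : Matrix ι ι V),
    N ι vᴴ = N ι v
  ruan1 : ∀ (ι κ : Type) [Fintype ι] [DecidableEq ι] [Fintype κ] [DecidableEq κ]
    (α : Matrix ι κ ℂ) (v : Matrix κ κ V) (β : Matrix κ ι ℂ),
    N ι (trip α v β) ≤ opN α * N κ v * opN β
  ruan2 : ∀ (ι κ : Type) [Fintype ι] [DecidableEq ι] [Fintype κ] [DecidableEq κ]
    (v : Matrix ι ι V) (w : Matrix κ κ V),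
    N (ι ⊕ κ) (Matrix.fromBlocks v 0 0 w) = max (N ι v) (N κ w)
  pos_sa : ∀ (ι : Type) [Fintype ι] [DecidableEq ι] (v : Matrix ι ι V),
    v ∈ pos ι → vᴴ = v
  pos_add : ∀ (ι : Type) [Fintype ι] [DecidableEq ι] (v w : Matrix ι ι V),
    v ∈ pos ι → w ∈ pos ι → v + w ∈ pos ι
  pos_smul : ∀ (ι : Type) [Fintype ι] [DecidableEq ι] (c : ℝ) (v : Matrix ι ι V),
    0 ≤ c → v ∈ pos ι → (c : ℂ) • v ∈ pos ι
  pos_compress : ∀ (ι κ : Type) [Fintype ι] [DecidableEq ι] [Fintype κ]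
    [DecidableEq κ] (α : Matrix ι κ ℂ) (v : Matrix κ κ V),
    v ∈ pos κ → trip α v αᴴ ∈ pos ι
  pos_closed : ∀ (ι : Type) [Fintype ι] [DecidableEq ι] (z : Matrix ι ι V),
    (∀ ε : ℝ, 0 < ε → ∃ u ∈ pos ι, N ι (z - u) < ε) → z ∈ pos ι
  reg1 : ∀ (ι : Type) [Fintype ι] [DecidableEq ι] (v u : Matrix ι ι V),
    vᴴ = v → u ∈ pos ι → u - v ∈ pos ι → u + v ∈ pos ι → N ι v ≤ N ι u
  reg2 : ∀ (ι : Type) [Fintype ι] [DecidableEq ι] (v : Matrix ι ι V),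
    vᴴ = v → N ι v < 1 →
    ∃ u ∈ pos ι, N ι u < 1 ∧ u - v ∈ pos ι ∧ u + v ∈ pos ι

section maps

variable {V W : Type} [AddCommGroup V] [Module ℂ V] [StarAddMonoid V]
  [StarModule ℂ V] [AddCommGroup W] [Module ℂ W] [StarAddMonoid W]
  [StarModule ℂ W]

/-- The norm of a single element, via the first matrix level. -/
def nrm1 (MV : MROS V) (v : V) : ℝ := MV.N PUnit (Matrix.of fun _ _ => v)

/-- A map into a matrix algebra is completely positive. -/
def IsCPs (MV : MROS V) {κ : Type} [Fintype κ] [DecidableEq κ]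
    (φ : V →ₗ[ℂ] Matrix κ κ ℂ) : Prop :=
  ∀ (ι : Type) [Fintype ι] [DecidableEq ι], ∀ z ∈ MV.pos ι, (ampS φ z).PosSemidef

/-- A map into a matrix algebra is completely bounded (in particular
continuous). -/
def IsCBs (MV : MROS V) {κ : Type} [Fintype κ] [DecidableEq κ]
    (φ : V →ₗ[ℂ] Matrix κ κ ℂ) : Prop :=
  ∃ C : ℝ, ∀ (ι : Type) [Fintype ι] [DecidableEq ι] (z : Matrix ι ι V),
    opN (ampS φ z) ≤ C * MV.N ι z

/-- A map into a matrix algebra is completely contractive. -/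
def IsCCs (MV : MROS V) {κ : Type} [Fintype κ] [DecidableEq κ]
    (φ : V →ₗ[ℂ] Matrix κ κ ℂ) : Prop :=
  ∀ (ι : Type) [Fintype ι] [DecidableEq ι] (z : Matrix ι ι V),
    opN (ampS φ z) ≤ MV.N ι z

/-- A linear map between matrix regular operator spaces is completely
positive. -/
def IsCPm (MV : MROS V) (MW : MROS W) (T : V →ₗ[ℂ] W) : Prop :=
  ∀ (ι : Type) [Fintype ι] [DecidableEq ι], ∀ z ∈ MV.pos ι, mapMat T z ∈ MW.pos ι

/-- Completely bounded norm with respect to given matrix norm data. -/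
def cbWith (N1 : ∀ (ι : Type) [Fintype ι] [DecidableEq ι], Matrix ι ι V → ℝ)
    (N2 : ∀ (ι : Type) [Fintype ι] [DecidableEq ι], Matrix ι ι W → ℝ)
    (T : V →ₗ[ℂ] W) : ℝ :=
  sInf { C : ℝ | 0 ≤ C ∧ ∀ (ι : Type) [Fintype ι] [DecidableEq ι]
    (z : Matrix ι ι V), N2 ι (mapMat T z) ≤ C * N1 ι z }

/-- The completely bounded norm of a map between matrix regular operator
spaces. -/
def cbN (MV : MROS V) (MW : MROS W) (T : V →ₗ[ℂ] W) : ℝ := cbWith MV.N MW.N T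

/-- The adjoint map `T^*(v) = (T(v^*))^*`. -/
def adjMap (T : V →ₗ[ℂ] W) : V →ₗ[ℂ] W where
  toFun v := star (T (star v))
  map_add' v w := by simp [star_add, map_add]
  map_smul' c v := by simp [star_smul, _root_.map_smul]

/-- `T` is decomposable, witnessed by completely positive maps `S1`, `S2`,
relative to given cone data on domain and codomain. -/
def IsDecompW
    (P1 : ∀ (ι : Type) [Fintype ι] [DecidableEq ι], Set (Matrix ι ι V))
    (P2 : ∀ (ι : Type) [Fintype ι] [DecidableEq ι], Set (Matrix ι ι W))
    (T S1 S2 : V →ₗ[ℂ] W) : Prop :=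
  ∀ (ι : Type) [Fintype ι] [DecidableEq ι], ∀ v ∈ P1 ι,
    Matrix.fromBlocks (mapMat S1 v) (mapMat T v) (mapMat (adjMap T) v)
      (mapMat S2 v) ∈ P2 (ι ⊕ ι)

/-- `T` is decomposable. -/
def Decomp (MV : MROS V) (MW : MROS W) (T : V →ₗ[ℂ] W) : Prop :=
  ∃ S1 S2 : V →ₗ[ℂ] W, IsDecompW MV.pos MW.pos T S1 S2

/-- Operator norm (at the first level) of a linear map, with respect to given
level-one norms. -/
def op1With (n1 : V → ℝ) (n2 : W → ℝ) (T : V →ₗ[ℂ] W) : ℝ :=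
  sInf { C : ℝ | 0 ≤ C ∧ ∀ v : V, n2 (T v) ≤ C * n1 v }

/-- Decomposable norm with respect to given cone and norm data. -/
def decWith
    (P1 : ∀ (ι : Type) [Fintype ι] [DecidableEq ι], Set (Matrix ι ι V))
    (P2 : ∀ (ι : Type) [Fintype ι] [DecidableEq ι], Set (Matrix ι ι W))
    (n1 : V → ℝ) (n2 : W → ℝ) (T : V →ₗ[ℂ] W) : ℝ :=
  sInf { c : ℝ | ∃ S1 S2 : V →ₗ[ℂ] W, IsDecompW P1 P2 T S1 S2 ∧
    op1With n1 n2 S1 ≤ c ∧ op1With n1 n2 S2 ≤ c }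

/-- The decomposable norm of a map between matrix regular operator spaces. -/
def decN (MV : MROS V) (MW : MROS W) (T : V →ₗ[ℂ] W) : ℝ :=
  decWith MV.pos MW.pos (nrm1 MV) (nrm1 MW) T

end maps

section tensor

variable {V W : Type} [AddCommGroup V] [Module ℂ V] [StarAddMonoid V]
  [StarModule ℂ V] [AddCommGroup W] [Module ℂ W] [StarAddMonoid W]
  [StarModule ℂ W]

/-- The Kronecker product of a `V`-valued and a `W`-valued matrix, with values
in `V ⊗ W`. -/
def kron {ι κ : Type} (v : Matrix ι ι V) (w : Matrix κ κ W) :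
    Matrix (ι × κ) (ι × κ) (V ⊗[ℂ] W) :=
  Matrix.of fun a b => v a.1 b.1 ⊗ₜ[ℂ] w a.2 b.2

/-- The tensor product `φ ⊗ ψ : V ⊗ W → M_{k×l}` of two matrix-algebra valued
maps. -/
def pairMap {k l : Type} (φ : V →ₗ[ℂ] Matrix k k ℂ)
    (ψ : W →ₗ[ℂ] Matrix l l ℂ) :
    (V ⊗[ℂ] W) →ₗ[ℂ] Matrix (k × l) (k × l) ℂ :=
  TensorProduct.lift (LinearMap.mk₂ ℂ
    (fun v w => Matrix.of fun a b => φ v a.1 b.1 * ψ w a.2 b.2)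
    (fun v v' w => by
      ext a b
      simp [map_add, Matrix.add_apply, add_mul])
    (fun c v w => by
      ext a b
      simp [_root_.map_smul, Matrix.smul_apply, smul_eq_mul]
      ring)
    (fun v w w' => by
      ext a b
      simp [map_add, Matrix.add_apply, mul_add])
    (fun c v w => by
      ext a b
      simp [_root_.map_smul, Matrix.smul_apply, smul_eq_mul]
      ring))

variable (MV : MROS V) (MW : MROS W)

/-- The cone `M_ι(V ⊗_Δ W)_+` of elements `α (v ⊗ w) α^*` with `v, w`
positive. -/
def DeltaPos (ι : Type) [Fintype ι] [DecidableEq ι] :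
    Set (Matrix ι ι (V ⊗[ℂ] W)) :=
  { z | ∃ (k l : ℕ) (v : Matrix (Fin k) (Fin k) V)
      (w : Matrix (Fin l) (Fin l) W) (α : Matrix ι (Fin k × Fin l) ℂ),
      v ∈ MV.pos (Fin k) ∧ w ∈ MW.pos (Fin l) ∧ z = trip α (kron v w) αᴴ }

/-- `|z|_Δ` for `z ∈ M_ι(V ⊗_Δ W)_+`. -/
def DeltaAbs (ι : Type) [Fintype ι] [DecidableEq ι]
    (z : Matrix ι ι (V ⊗[ℂ] W)) : ℝ :=
  sInf { r : ℝ | ∃ (k l : ℕ) (v : Matrix (Fin k) (Fin k) V)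
    (w : Matrix (Fin l) (Fin l) W) (α : Matrix ι (Fin k × Fin l) ℂ),
    v ∈ MV.pos (Fin k) ∧ w ∈ MW.pos (Fin l) ∧ z = trip α (kron v w) αᴴ ∧
    r = opN α ^ 2 * MV.N (Fin k) v * MW.N (Fin l) w }

/-- The norm `‖z‖_Δ`. -/
def DeltaN [Star (V ⊗[ℂ] W)] (ι : Type) [Fintype ι] [DecidableEq ι]
    (z : Matrix ι ι (V ⊗[ℂ] W)) : ℝ :=
  sInf { r : ℝ | ∃ u u' : Matrix ι ι (V ⊗[ℂ] W),
    Matrix.fromBlocks u z zᴴ u' ∈ DeltaPos MV MW (ι ⊕ ι) ∧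
    r = max (DeltaAbs MV MW ι u) (DeltaAbs MV MW ι u') }

/-- The closed cone `M_ι(V ⊗_Δ W)^+` (closure of `M_ι(V ⊗_Δ W)_+` in
`‖·‖_Δ`). -/
def DeltaPosC [Star (V ⊗[ℂ] W)] (ι : Type) [Fintype ι] [DecidableEq ι] :
    Set (Matrix ι ι (V ⊗[ℂ] W)) :=
  { z | ∀ ε : ℝ, 0 < ε → ∃ u ∈ DeltaPos MV MW ι, DeltaN MV MW ι (z - u) < ε }

/-- The cone `M_ι(V ⊗_δ W)_+`: elements whose pairings with all continuous
completely positive maps into matrix algebras are positive semidefinite. -/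
def deltaPos (ι : Type) [Fintype ι] [DecidableEq ι] :
    Set (Matrix ι ι (V ⊗[ℂ] W)) :=
  { z | ∀ (k l : ℕ) (φ : V →ₗ[ℂ] Matrix (Fin k) (Fin k) ℂ)
      (ψ : W →ₗ[ℂ] Matrix (Fin l) (Fin l) ℂ),
      IsCPs MV φ → IsCBs MV φ → IsCPs MW ψ → IsCBs MW ψ →
      (ampS (pairMap φ ψ) z).PosSemidef }

/-- `|z|_δ` for `z ∈ M_ι(V ⊗_δ W)_+`. -/
def deltaAbs (ι : Type) [Fintype ι] [DecidableEq ι]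
    (z : Matrix ι ι (V ⊗[ℂ] W)) : ℝ :=
  sSup { r : ℝ | ∃ (k l : ℕ) (φ : V →ₗ[ℂ] Matrix (Fin k) (Fin k) ℂ)
    (ψ : W →ₗ[ℂ] Matrix (Fin l) (Fin l) ℂ),
    IsCPs MV φ ∧ IsCCs MV φ ∧ IsCPs MW ψ ∧ IsCCs MW ψ ∧
    r = opN (ampS (pairMap φ ψ) z) }

/-- The norm `‖z‖_δ`. -/
def deltaN [Star (V ⊗[ℂ] W)] (ι : Type) [Fintype ι] [DecidableEq ι]
    (z : Matrix ι ι (V ⊗[ℂ] W)) : ℝ :=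
  sInf { r : ℝ | ∃ u u' : Matrix ι ι (V ⊗[ℂ] W),
    Matrix.fromBlocks u z zᴴ u' ∈ deltaPos MV MW (ι ⊕ ι) ∧
    r = max (deltaAbs MV MW ι u) (deltaAbs MV MW ι u') }

/-- The closed cone `M_ι(V ⊗_δ W)^+`. -/
def deltaPosC [Star (V ⊗[ℂ] W)] (ι : Type) [Fintype ι] [DecidableEq ι] :
    Set (Matrix ι ι (V ⊗[ℂ] W)) :=
  { z | ∀ ε : ℝ, 0 < ε → ∃ u ∈ deltaPos MV MW ι, deltaN MV MW ι (z - u) < ε }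

/-- The injective operator space tensor norm `‖z‖_∨`: the supremum of pairings
with all pairs of complete contractions into matrix algebras. -/
def veeN (ι : Type) [Fintype ι] [DecidableEq ι]
    (z : Matrix ι ι (V ⊗[ℂ] W)) : ℝ :=
  sSup { r : ℝ | ∃ (k l : ℕ) (φ : V →ₗ[ℂ] Matrix (Fin k) (Fin k) ℂ)
    (ψ : W →ₗ[ℂ] Matrix (Fin l) (Fin l) ℂ),
    IsCCs MV φ ∧ IsCCs MW ψ ∧ r = opN (ampS (pairMap φ ψ) z) }

end tensor

section dual

variable {V : Type} [AddCommGroup V] [Module ℂ V] [StarAddMonoid V]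
  [StarModule ℂ V]

/-- The dual matrix cone on `M_ι(V^*)` : matrices of functionals which pair
positively with all positive matrices over `V`. -/
def dualPos (MV : MROS V) (ι : Type) [Fintype ι] [DecidableEq ι]
    (F : Matrix ι ι (V →ₗ[ℂ] ℂ)) : Prop :=
  ∀ (k : ℕ) (v : Matrix (Fin k) (Fin k) V), v ∈ MV.pos (Fin k) →
    (Matrix.of fun (a b : Fin k × ι) => F a.2 b.2 (v a.1 b.1)).PosSemidef

/-- The dual matrix norm on `M_ι(V^*)`. -/
def dualN (MV : MROS V) (ι : Type) [Fintype ι] [DecidableEq ι]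
    (F : Matrix ι ι (V →ₗ[ℂ] ℂ)) : ℝ :=
  sSup { r : ℝ | ∃ (k : ℕ) (v : Matrix (Fin k) (Fin k) V),
    MV.N (Fin k) v ≤ 1 ∧
    r = opN (Matrix.of fun (a b : Fin k × ι) => F a.2 b.2 (v a.1 b.1)) }

end dual

section aux3

variable {V : Type} [AddCommGroup V] [Module ℂ V] [StarAddMonoid V]
  [StarModule ℂ V]

lemma trip_apply' {V : Type} [AddCommGroup V] [Module ℂ V]
    {ι κ κ' ι' : Type} [Fintype κ] [Fintype κ']
    (α : Matrix ι κ ℂ) (x : Matrix κ κ' V) (β : Matrix κ' ι' ℂ) (i : ι) (j : ι') :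
    trip α x β i j = ∑ c', ∑ c, (β c' j * α i c) • x c c' := by
  simp [trip, mulR, mulL, Finset.smul_sum, smul_smul]

lemma N_nonneg' (MV : MROS V) (ι : Type) [Fintype ι] [DecidableEq ι]
    (x : Matrix ι ι V) : 0 ≤ MV.N ι x := by
  have h0 : MV.N ι (0 : Matrix ι ι V) = 0 := (MV.N_zero ι 0).2 rfl
  have h1 := MV.N_add ι x (-x)
  have h2 : MV.N ι (-x) = MV.N ι x := by
    have := MV.N_smul ι (-1) x
    simpa using this
  rw [add_neg_cancel, h0, h2] at h1
  linarith

lemma sel_pos (MV : MROS V) {κ μ : Type} [Fintype κ] [DecidableEq κ]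
    [Fintype μ] [DecidableEq μ] (f : κ → μ) (P : Matrix μ μ V)
    (hP : P ∈ MV.pos μ) :
    (Matrix.of fun i j => P (f i) (f j)) ∈ MV.pos κ := by
  have h := MV.pos_compress κ μ (Matrix.of fun i c => if c = f i then (1:ℂ) else 0) P hP
  have he : trip (Matrix.of fun i c => if c = f i then (1:ℂ) else 0) P
      (Matrix.of fun i c => if c = f i then (1:ℂ) else 0)ᴴ
      = Matrix.of fun i j => P (f i) (f j) := by
    ext i j
    rw [trip_apply']
    simp [Matrix.conjTranspose_apply, apply_ite, ite_smul, mul_ite, ite_mul]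
  rwa [he] at h

/-- For any `v` there is a positive matrix with off-diagonal blocks `v`, `vᴴ`. -/
lemma dominate (MV : MROS V) (κ : Type) [Fintype κ] [DecidableEq κ]
    (v : Matrix κ κ V) :
    ∃ P ∈ MV.pos (κ ⊕ κ), (∀ i j, P (Sum.inl i) (Sum.inr j) = v i j) ∧
      (∀ i j, P (Sum.inr i) (Sum.inl j) = star (v j i)) := by
  set vh : Matrix (κ ⊕ κ) (κ ⊕ κ) V := Matrix.fromBlocks 0 v vᴴ 0 with hvh
  have hsa : vhᴴ = vh := by
    simp [hvh, Matrix.fromBlocks_conjTranspose]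
  set t : ℝ := MV.N (κ ⊕ κ) vh + 1 with ht
  have htpos : 0 < t := by
    have := N_nonneg' MV (κ ⊕ κ) vh
    linarith
  have htne : (t : ℂ) ≠ 0 := by
    exact_mod_cast ne_of_gt htpos
  have hsa' : (((t : ℂ)⁻¹) • vh)ᴴ = ((t : ℂ)⁻¹) • vh := by
    rw [Matrix.conjTranspose_smul, hsa]
    congr 1
    simp
  have hNlt : MV.N (κ ⊕ κ) (((t : ℂ)⁻¹) • vh) < 1 := by
    rw [MV.N_smul]
    have : ‖((t : ℂ)⁻¹)‖ = t⁻¹ := by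
      rw [norm_inv, Complex.norm_real, Real.norm_of_nonneg htpos.le]
    rw [this]
    rw [inv_mul_lt_one₀ htpos]  -- maybe wrong name
    linarith
  obtain ⟨u, hu, _, hm, hp⟩ := MV.reg2 (κ ⊕ κ) (((t : ℂ)⁻¹) • vh) hsa' hNlt
  set s : κ ⊕ κ → ℂ := Sum.elim (fun _ => 1) (fun _ => -1) with hs
  set D : Matrix (κ ⊕ κ) (κ ⊕ κ) ℂ := Matrix.diagonal s with hD
  have hC : trip D (u - ((t : ℂ)⁻¹) • vh) Dᴴ ∈ MV.pos (κ ⊕ κ) :=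
    MV.pos_compress _ _ D _ hm
  have hCval : ∀ a b, trip D (u - ((t : ℂ)⁻¹) • vh) Dᴴ a b
      = (s a * star (s b)) • (u - ((t : ℂ)⁻¹) • vh) a b := by
    intro a b
    rw [trip_apply']
    simp [hD, Matrix.diagonal_apply, Matrix.conjTranspose_apply, apply_ite,
      ite_smul, mul_ite, ite_mul, smul_smul, mul_comm]
  set P : Matrix (κ ⊕ κ) (κ ⊕ κ) V :=
    ((t/2 : ℝ) : ℂ) • ((u + ((t : ℂ)⁻¹) • vh) + trip D (u - ((t : ℂ)⁻¹) • vh) Dᴴ)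
    with hPdef
  have hPpos : P ∈ MV.pos (κ ⊕ κ) :=
    MV.pos_smul _ (t/2) _ (by linarith) (MV.pos_add _ _ _ hp hC)
  refine ⟨P, hPpos, ?_, ?_⟩
  · intro i j
    have h1 : s (Sum.inl i) * star (s (Sum.inr j)) = -1 := by simp [hs]
    simp only [hPdef, Matrix.smul_apply, Matrix.add_apply, hCval, h1,
      Matrix.sub_apply, Matrix.smul_apply]
    have hv : vh (Sum.inl i) (Sum.inr j) = v i j := by
      simp [hvh]
    rw [hv]
    rw [neg_one_smul, neg_sub]
    have : (u (Sum.inl i) (Sum.inr j) + ((t:ℂ)⁻¹) • v i j)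
        + (((t:ℂ)⁻¹) • v i j - u (Sum.inl i) (Sum.inr j))
        = ((2 * (t:ℂ)⁻¹)) • v i j := by
      rw [two_mul, add_smul]
      abel
    rw [this, smul_smul]
    rw [show ((t/2 : ℝ) : ℂ) * (2 * (t:ℂ)⁻¹) = 1 by
      push_cast
      field_simp]
    rw [one_smul]
  · intro i j
    have h1 : s (Sum.inr i) * star (s (Sum.inl j)) = -1 := by simp [hs]
    simp only [hPdef, Matrix.smul_apply, Matrix.add_apply, hCval, h1,
      Matrix.sub_apply, Matrix.smul_apply]
    have hv : vh (Sum.inr i) (Sum.inl j) = star (v j i) := by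
      simp [hvh, Matrix.conjTranspose_apply]
    rw [hv]
    rw [neg_one_smul, neg_sub]
    have : (u (Sum.inr i) (Sum.inl j) + ((t:ℂ)⁻¹) • star (v j i))
        + (((t:ℂ)⁻¹) • star (v j i) - u (Sum.inr i) (Sum.inl j))
        = ((2 * (t:ℂ)⁻¹)) • star (v j i) := by
      rw [two_mul, add_smul]
      abel
    rw [this, smul_smul]
    rw [show ((t/2 : ℝ) : ℂ) * (2 * (t:ℂ)⁻¹) = 1 by
      push_cast
      field_simp]
    rw [one_smul]

end aux3

/-- Every element of `M_ι(V ⊗ W)` admits a pair of Δ-positive "caps". -/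
theorem stmt_3 {V W : Type} [AddCommGroup V] [Module ℂ V] [StarAddMonoid V]
    [StarModule ℂ V] [AddCommGroup W] [Module ℂ W] [StarAddMonoid W]
    [StarModule ℂ W] [StarAddMonoid (V ⊗[ℂ] W)] [StarModule ℂ (V ⊗[ℂ] W)]
    (hst : ∀ (v : V) (w : W), star (v ⊗ₜ[ℂ] w) = star v ⊗ₜ[ℂ] star w)
    (MV : MROS V) (MW : MROS W)
    (ι : Type) [Fintype ι] [DecidableEq ι] (k l : ℕ)
    (v : Matrix (Fin k) (Fin k) V) (w : Matrix (Fin l) (Fin l) W)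
    (α β : Matrix ι (Fin k × Fin l) ℂ) (z : Matrix ι ι (V ⊗[ℂ] W))
    (hz : z = trip α (kron v w) βᴴ) :
    ∃ u₁ ∈ DeltaPos MV MW ι, ∃ u₂ ∈ DeltaPos MV MW ι,
      Matrix.fromBlocks u₁ z zᴴ u₂ ∈ DeltaPos MV MW (ι ⊕ ι) := by
  obtain ⟨P, hP, hP12, hP21⟩ := dominate MV (Fin k) v
  obtain ⟨Q, hQ, hQ12, hQ21⟩ := dominate MW (Fin l) w
  have hP11 : (Matrix.of fun i j => P (Sum.inl i) (Sum.inl j)) ∈ MV.pos (Fin k) :=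
    sel_pos MV Sum.inl P hP
  have hP22 : (Matrix.of fun i j => P (Sum.inr i) (Sum.inr j)) ∈ MV.pos (Fin k) :=
    sel_pos MV Sum.inr P hP
  have hQ11 : (Matrix.of fun i j => Q (Sum.inl i) (Sum.inl j)) ∈ MW.pos (Fin l) :=
    sel_pos MW Sum.inl Q hQ
  have hQ22 : (Matrix.of fun i j => Q (Sum.inr i) (Sum.inr j)) ∈ MW.pos (Fin l) :=
    sel_pos MW Sum.inr Q hQ
  refine ⟨trip α (kron (Matrix.of fun i j => P (Sum.inl i) (Sum.inl j))
      (Matrix.of fun i j => Q (Sum.inl i) (Sum.inl j))) αᴴ,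
    ⟨k, l, _, _, α, hP11, hQ11, rfl⟩,
    trip β (kron (Matrix.of fun i j => P (Sum.inr i) (Sum.inr j))
      (Matrix.of fun i j => Q (Sum.inr i) (Sum.inr j))) βᴴ,
    ⟨k, l, _, _, β, hP22, hQ22, rfl⟩, ?_⟩
  -- the Fin reindexing equivalences
  set eK : Fin k ⊕ Fin k ≃ Fin (k + k) := finSumFinEquiv with heK
  set eL : Fin l ⊕ Fin l ≃ Fin (l + l) := finSumFinEquiv with heL
  set e : (Fin k ⊕ Fin k) × (Fin l ⊕ Fin l) ≃ Fin (k + k) × Fin (l + l) :=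
    eK.prodCongr eL with he
  set P' : Matrix (Fin (k + k)) (Fin (k + k)) V :=
    Matrix.of fun i j => P (eK.symm i) (eK.symm j) with hP'
  set Q' : Matrix (Fin (l + l)) (Fin (l + l)) W :=
    Matrix.of fun i j => Q (eL.symm i) (eL.symm j) with hQ'
  -- the interlacing scalar matrix
  set g : (ι ⊕ ι) → ((Fin k ⊕ Fin k) × (Fin l ⊕ Fin l)) → ℂ := fun a c =>
    Sum.elim
      (fun i => Sum.elim
        (fun p => Sum.elim (fun q => α i (p, q)) (fun _ => 0) c.2)
        (fun _ => 0) c.1)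
      (fun i => Sum.elim
        (fun _ => 0)
        (fun p => Sum.elim (fun _ => 0) (fun q => β i (p, q)) c.2) c.1)
      a with hg
  set γ : Matrix (ι ⊕ ι) (Fin (k + k) × Fin (l + l)) ℂ :=
    Matrix.of fun a c => g a (eK.symm c.1, eL.symm c.2) with hγ
  refine ⟨k + k, l + l, P', Q', γ, sel_pos MV eK.symm P hP, sel_pos MW eL.symm Q hQ, ?_⟩
  have key : ∀ a b : ι ⊕ ι, trip γ (kron P' Q') γᴴ a b
      = ∑ d' : (Fin k ⊕ Fin k) × (Fin l ⊕ Fin l), ∑ d,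
        (star (g b d') * g a d) • (P d.1 d'.1 ⊗ₜ[ℂ] Q d.2 d'.2) := by
    intro a b
    rw [trip_apply']
    refine Eq.symm (Fintype.sum_equiv e _ _ fun d' => ?_)
    refine Eq.symm (Eq.symm (Fintype.sum_equiv e _ _ fun d => ?_))
    simp [hγ, hP', hQ', he, kron, Matrix.conjTranspose_apply]
  ext a b
  rw [key]
  cases a with
  | inl i =>
    cases b with
    | inl j =>
      rw [Matrix.fromBlocks_apply₁₁, trip_apply']
      simp only [Fintype.sum_prod_type, Fintype.sum_sum_type, hg,
        Sum.elim_inl, Sum.elim_inr, star_zero, mul_zero, zero_mul, zero_smul,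
        Finset.sum_const_zero, add_zero, zero_add, kron, Matrix.of_apply,
        Matrix.conjTranspose_apply]
    | inr j =>
      rw [Matrix.fromBlocks_apply₁₂, hz, trip_apply']
      simp only [Fintype.sum_prod_type, Fintype.sum_sum_type, hg,
        Sum.elim_inl, Sum.elim_inr, star_zero, mul_zero, zero_mul, zero_smul,
        Finset.sum_const_zero, add_zero, zero_add, kron, Matrix.of_apply,
        Matrix.conjTranspose_apply, hP12, hQ12]
  | inr i =>
    cases b with
    | inl j =>
      rw [Matrix.fromBlocks_apply₂₁, Matrix.conjTranspose_apply, hz, trip_apply',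
        Finset.sum_comm]
      clear ‹StarModule ℂ (V ⊗[ℂ] W)› ‹StarAddMonoid (V ⊗[ℂ] W)›
      simp only [star_sum, star_smul, star_mul', star_star, hst,
        Fintype.sum_prod_type, Fintype.sum_sum_type, hg,
        Sum.elim_inl, Sum.elim_inr, star_zero, mul_zero, zero_mul, zero_smul,
        Finset.sum_const_zero, add_zero, zero_add, kron, Matrix.of_apply,
        Matrix.conjTranspose_apply, hP21, hQ21, mul_comm]
    | inr j =>
      rw [Matrix.fromBlocks_apply₂₂, trip_apply']
      simp only [Fintype.sum_prod_type, Fintype.sum_sum_type, hg,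
        Sum.elim_inl, Sum.elim_inr, star_zero, mul_zero, zero_mul, zero_smul,
        Finset.sum_const_zero, add_zero, zero_add, kron, Matrix.of_apply,
        Matrix.conjTranspose_apply]
end
end

section
/- Let $V$ and $W$ be matrix regular operator spaces. The cone $M_n(V \otimes_\delta W)_+$ is proper: if $z \in M_n(V \otimes_\delta W)_+$ and $-z \in M_n(V \otimes_\delta W)_+$, then $z = 0$. -/
open scoped TensorProduct ComplexConjugate ComplexOrder
open Matrix

noncomputable section

set_option linter.unusedSectionVars false
namespace StmtAux

variable {V : Type} [AddCommGroup V] [Module ℂ V] [StarAddMonoid V]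
  [StarModule ℂ V]

lemma N_zero_mat (MV : MROS V) (ι : Type) [Fintype ι] [DecidableEq ι] :
    MV.N ι 0 = 0 := by
  have h := MV.N_smul ι 0 0
  simpa using h

lemma N_nonneg (MV : MROS V) (ι : Type) [Fintype ι] [DecidableEq ι]
    (z : Matrix ι ι V) : 0 ≤ MV.N ι z := by
  have h1 := MV.N_add ι z (-z)
  have h2 := MV.N_smul ι (-1) z
  have h3 : z + -z = (0 : Matrix ι ι V) := by abel
  rw [h3, N_zero_mat] at h1
  have h4 : (-1 : ℂ) • z = -z := by simp
  rw [h4] at h2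
  simp only [norm_neg, norm_one, one_mul] at h2
  linarith

lemma N_neg (MV : MROS V) (ι : Type) [Fintype ι] [DecidableEq ι]
    (z : Matrix ι ι V) : MV.N ι (-z) = MV.N ι z := by
  have h2 := MV.N_smul ι (-1) z
  have h4 : (-1 : ℂ) • z = -z := by simp
  rw [h4] at h2
  simpa using h2

/-- One-by-one matrix with given entry. -/
def m1 (v : V) : Matrix PUnit PUnit V := Matrix.of fun _ _ => v

lemma m1_entry (v : V) : m1 v PUnit.unit PUnit.unit = v := rfl

lemma m1_eq (m : Matrix PUnit PUnit V) : m = m1 (m PUnit.unit PUnit.unit) := by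
  ext i j; rfl

@[simp] lemma m1_add (v w : V) : m1 (v + w) = m1 v + m1 w := by ext i j; rfl
@[simp] lemma m1_sub (v w : V) : m1 (v - w) = m1 v - m1 w := by ext i j; rfl
@[simp] lemma m1_neg (v : V) : m1 (-v) = -(m1 v) := by ext i j; rfl
@[simp] lemma m1_smul (c : ℂ) (v : V) : m1 (c • v) = c • (m1 v) := by ext i j; rfl
@[simp] lemma m1_zero : m1 (0 : V) = 0 := by ext i j; rfl
@[simp] lemma m1_star (v : V) : m1 (star v) = (m1 v)ᴴ := by ext i j; rfl
lemma m1_inj {v w : V} (h : m1 v = m1 w) : v = w := by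
  have := congrFun (congrFun h PUnit.unit) PUnit.unit
  exact this

lemma nrm1_def (MV : MROS V) (v : V) : nrm1 MV v = MV.N PUnit (m1 v) := rfl

lemma nrm1_nonneg (MV : MROS V) (v : V) : 0 ≤ nrm1 MV v := N_nonneg MV _ _

lemma nrm1_eq_zero (MV : MROS V) (v : V) : nrm1 MV v = 0 ↔ v = 0 := by
  rw [nrm1_def, MV.N_zero]
  constructor
  · intro h; exact m1_inj (by rw [h, m1_zero])
  · intro h; rw [h, m1_zero]

lemma nrm1_add (MV : MROS V) (v w : V) :
    nrm1 MV (v + w) ≤ nrm1 MV v + nrm1 MV w := by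
  rw [nrm1_def, nrm1_def, nrm1_def, m1_add]; exact MV.N_add _ _ _

lemma nrm1_smul (MV : MROS V) (c : ℂ) (v : V) :
    nrm1 MV (c • v) = ‖c‖ * nrm1 MV v := by
  rw [nrm1_def, nrm1_def, m1_smul]; exact MV.N_smul _ _ _

lemma nrm1_star (MV : MROS V) (v : V) : nrm1 MV (star v) = nrm1 MV v := by
  rw [nrm1_def, nrm1_def, m1_star]; exact MV.N_star _ _

lemma nrm1_neg (MV : MROS V) (v : V) : nrm1 MV (-v) = nrm1 MV v := by
  rw [nrm1_def, nrm1_def, m1_neg]; exact N_neg MV _ _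

/-- The level-one cone, as a subset of `V`. -/
def C (MV : MROS V) : Set V := { v | m1 v ∈ MV.pos PUnit }

lemma zero_mem_C (MV : MROS V) : (0 : V) ∈ C MV := by
  obtain ⟨u, hu, -⟩ := MV.reg2 PUnit 0 (by simp) (by rw [N_zero_mat]; norm_num)
  have h := MV.pos_smul PUnit 0 u le_rfl hu
  simpa [C] using h

lemma C_add (MV : MROS V) {v w : V} (hv : v ∈ C MV) (hw : w ∈ C MV) :
    v + w ∈ C MV := by
  have := MV.pos_add PUnit _ _ hv hw
  simpa [C, m1_add] using this

lemma C_smul (MV : MROS V) {v : V} (r : ℝ) (hr : 0 ≤ r) (hv : v ∈ C MV) :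
    (r : ℂ) • v ∈ C MV := by
  have := MV.pos_smul PUnit r _ hr hv
  show m1 ((r : ℂ) • v) ∈ MV.pos PUnit
  rw [m1_smul]; exact this

lemma C_star (MV : MROS V) {v : V} (hv : v ∈ C MV) : star v = v := by
  have := MV.pos_sa PUnit _ hv
  exact m1_inj (by rw [m1_star, this])

lemma C_proper (MV : MROS V) {v : V} (hv : v ∈ C MV) (hv' : -v ∈ C MV) :
    v = 0 := by
  have hz : (0 : Matrix PUnit PUnit V) ∈ MV.pos PUnit := by
    have := zero_mem_C MV; simpa [C] using this
  have hsa : (m1 v)ᴴ = m1 v := MV.pos_sa PUnit _ hv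
  have h1 : (0 : Matrix PUnit PUnit V) - m1 v ∈ MV.pos PUnit := by
    have : (0 : Matrix PUnit PUnit V) - m1 v = m1 (-v) := by simp
    rw [this]; exact hv'
  have h2 : (0 : Matrix PUnit PUnit V) + m1 v ∈ MV.pos PUnit := by
    rw [zero_add]; exact hv
  have := MV.reg1 PUnit (m1 v) 0 hsa hz h1 h2
  rw [N_zero_mat] at this
  have hn : MV.N PUnit (m1 v) = 0 := le_antisymm this (N_nonneg _ _ _)
  have := (MV.N_zero PUnit (m1 v)).mp hn
  exact m1_inj (by rw [this, m1_zero])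

end StmtAux
namespace StmtAux

variable {V : Type} [AddCommGroup V] [Module ℂ V] [StarAddMonoid V]
  [StarModule ℂ V]

/-- Type synonym for `V` as a real normed space with norm `nrm1 MV`. -/
def VR (MV : MROS V) : Type := V

/-- Identity map into the synonym. -/
def toVR (MV : MROS V) (v : V) : VR MV := v
def ofVR {MV : MROS V} (v : VR MV) : V := v

instance (MV : MROS V) : AddCommGroup (VR MV) := inferInstanceAs (AddCommGroup V)

instance (MV : MROS V) : Module ℝ (VR MV) :=
  Module.compHom V (algebraMap ℝ ℂ)

lemma toVR_add (MV : MROS V) (v w : V) :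
    toVR MV (v + w) = toVR MV v + toVR MV w := rfl

lemma toVR_smul (MV : MROS V) (r : ℝ) (v : V) :
    toVR MV ((r : ℂ) • v) = r • toVR MV v := rfl

noncomputable instance (MV : MROS V) : NormedAddCommGroup (VR MV) :=
  AddGroupNorm.toNormedAddCommGroup
    { toFun := fun v => nrm1 MV (ofVR v)
      map_zero' := (nrm1_eq_zero MV 0).mpr rfl
      add_le' := fun v w => nrm1_add MV (ofVR v) (ofVR w)
      neg' := fun v => nrm1_neg MV (ofVR v)
      eq_zero_of_map_eq_zero' := fun v h => (nrm1_eq_zero MV (ofVR v)).mp h }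

lemma norm_toVR (MV : MROS V) (v : V) : ‖toVR MV v‖ = nrm1 MV v := rfl

noncomputable instance (MV : MROS V) : NormedSpace ℝ (VR MV) where
  norm_smul_le r v := by
    have : r • v = toVR MV ((r : ℂ) • ofVR v) := rfl
    rw [this, norm_toVR, nrm1_smul]
    simp [ofVR]
    rfl

/-- The cone, inside the synonym. -/
def CR (MV : MROS V) : Set (VR MV) := { v | ofVR v ∈ C MV }

lemma CR_closed (MV : MROS V) : IsClosed (CR MV) := by
  apply isClosed_of_closure_subset
  intro x hx
  have key : ∀ ε : ℝ, 0 < ε → ∃ u ∈ MV.pos PUnit, MV.N PUnit (m1 (ofVR x) - u) < ε := by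
    intro ε hε
    obtain ⟨u, hu, hd⟩ := Metric.mem_closure_iff.mp hx ε hε
    refine ⟨m1 (ofVR u), hu, ?_⟩
    have : dist x u = nrm1 MV (ofVR x - ofVR u) := by rw [dist_eq_norm]; rfl
    rw [this] at hd
    rw [← m1_sub]
    exact hd
  exact MV.pos_closed PUnit (m1 (ofVR x)) key

lemma CR_convex (MV : MROS V) : Convex ℝ (CR MV) := by
  intro x hx y hy a b ha hb _
  have h1 : ofVR (a • x + b • y) = (a : ℂ) • ofVR x + (b : ℂ) • ofVR y := rfl
  show ofVR _ ∈ C MV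
  rw [h1]
  exact C_add MV (C_smul MV a ha hx) (C_smul MV b hb hy)

/-- Hahn-Banach separation: a point outside the cone admits a positive
functional which is negative at the point. -/
lemma exists_pos_functional (MV : MROS V) (y : V) (hy : y ∉ C MV) :
    ∃ g : VR MV →L[ℝ] ℝ, (∀ v ∈ C MV, 0 ≤ g (toVR MV v)) ∧ g (toVR MV y) < 0 := by
  obtain ⟨f, u, hfs, hfy⟩ :=
    geometric_hahn_banach_closed_point (CR_convex MV) (CR_closed MV) (s := CR MV)
      (x := toVR MV y) hy
  have hu : 0 < u := by
    have h0 := hfs (toVR MV 0) (zero_mem_C MV)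
    have hz : toVR MV 0 = 0 := rfl
    rw [hz, map_zero] at h0
    exact h0
  have hneg : ∀ v ∈ C MV, f (toVR MV v) ≤ 0 := by
    intro v hv
    by_contra h
    push_neg at h
    have ht : 0 ≤ (u + 1) / f (toVR MV v) := by positivity
    have hmem : ((((u + 1) / f (toVR MV v) : ℝ)) : ℂ) • v ∈ C MV := C_smul MV _ ht hv
    have := hfs (toVR MV ((((u + 1) / f (toVR MV v) : ℝ) : ℂ) • v)) hmem
    rw [toVR_smul, ContinuousLinearMap.map_smul] at this
    have hne : f (toVR MV v) ≠ 0 := ne_of_gt h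
    rw [smul_eq_mul, div_mul_cancel₀ _ hne] at this
    linarith
  refine ⟨-f, fun v hv => ?_, ?_⟩
  · simp only [ContinuousLinearMap.neg_apply, neg_nonneg]
    exact hneg v hv
  · simp only [ContinuousLinearMap.neg_apply, neg_neg, neg_lt, neg_zero]
    exact lt_trans hu hfy

/-- Positive functionals vanish on a self-adjoint element only if it is zero. -/
lemma sep_sa (MV : MROS V) (y : V) (hsa : star y = y)
    (h : ∀ g : VR MV →L[ℝ] ℝ, (∀ v ∈ C MV, 0 ≤ g (toVR MV v)) → g (toVR MV y) = 0) :
    y = 0 := by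
  by_contra hy
  by_cases hyC : y ∈ C MV
  · have hnyC : -y ∉ C MV := by
      intro hn
      exact hy (C_proper MV hyC hn)
    obtain ⟨g, hg, hgy⟩ := exists_pos_functional MV (-y) hnyC
    have : g (toVR MV y) = 0 := h g hg
    have hny : toVR MV (-y) = -toVR MV y := rfl
    rw [hny, map_neg, this] at hgy
    simp at hgy
  · obtain ⟨g, hg, hgy⟩ := exists_pos_functional MV y hyC
    rw [h g hg] at hgy
    exact lt_irrefl 0 hgy

end StmtAux
namespace StmtAux

variable {V : Type} [AddCommGroup V] [Module ℂ V] [StarAddMonoid V]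
  [StarModule ℂ V]

/-- Self-adjoint part. -/
def hpart (v : V) : V := (2⁻¹ : ℂ) • (v + star v)

lemma hpart_add (v w : V) : hpart (v + w) = hpart v + hpart w := by
  simp only [hpart, star_add, smul_add]
  abel

lemma hpart_real_smul (r : ℝ) (v : V) : hpart ((r : ℂ) • v) = (r : ℂ) • hpart v := by
  rw [hpart, hpart, star_smul, Complex.star_def, Complex.conj_ofReal, ← smul_add,
    smul_comm]

lemma hpart_neg (v : V) : hpart (-v) = -hpart v := by
  simp only [hpart, star_neg]
  rw [← neg_add, smul_neg]

lemma hpart_II (v : V) : hpart (Complex.I • Complex.I • v) = -hpart v := by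
  rw [smul_smul, Complex.I_mul_I, neg_one_smul, hpart_neg]

lemma hpart_star (v : V) : hpart (star v) = hpart v := by
  simp only [hpart, star_star, add_comm]

lemma hpart_I_star (v : V) : hpart (Complex.I • star v) = -(hpart (Complex.I • v)) := by
  simp only [hpart, star_smul, star_star, Complex.star_def, Complex.conj_I, neg_smul,
    smul_add, smul_neg]
  abel

lemma hpart_sa (v : V) : star (hpart v) = hpart v := by
  have h2 : star (2⁻¹ : ℂ) = (2⁻¹ : ℂ) := by
    simp [Complex.star_def, Complex.ext_iff]
  rw [hpart, star_smul, star_add, star_star, h2, add_comm]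

lemma hpart_of_sa {v : V} (h : star v = v) : hpart v = v := by
  rw [hpart, h, ← two_smul ℂ v, smul_smul]
  norm_num

lemma two_smul_eq_zero {v : V} (h : (2 : ℂ) • v = 0) : v = 0 := by
  have := smul_eq_zero.mp h
  rcases this with h' | h'
  · norm_num at h'
  · exact h'

lemma hpart_I_of_sa {v : V} (h : star v = v) : hpart (Complex.I • v) = 0 := by
  have hh := hpart_I_star v
  rw [h] at hh
  apply two_smul_eq_zero (v := hpart (Complex.I • v))
  rw [two_smul]
  nth_rewrite 1 [hh]
  abel

/-- The value of the complex functional built from `g`. -/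
def fgv (MV : MROS V) (g : VR MV →L[ℝ] ℝ) (v : V) : ℂ :=
  (g (toVR MV (hpart v)) : ℂ) -
    Complex.I * (g (toVR MV (hpart (Complex.I • v))) : ℂ)

lemma fgv_add (MV : MROS V) (g : VR MV →L[ℝ] ℝ) (v w : V) :
    fgv MV g (v + w) = fgv MV g v + fgv MV g w := by
  simp only [fgv, smul_add, hpart_add, toVR_add, map_add]
  push_cast
  ring

lemma fgv_rsmul (MV : MROS V) (g : VR MV →L[ℝ] ℝ) (r : ℝ) (v : V) :
    fgv MV g ((r : ℂ) • v) = (r : ℂ) * fgv MV g v := by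
  have hc : Complex.I • (r : ℂ) • v = (r : ℂ) • Complex.I • v := smul_comm _ _ _
  simp only [fgv, hc, hpart_real_smul, toVR_smul, ContinuousLinearMap.map_smul,
    smul_eq_mul]
  push_cast
  ring

lemma fgv_Ismul (MV : MROS V) (g : VR MV →L[ℝ] ℝ) (v : V) :
    fgv MV g (Complex.I • v) = Complex.I * fgv MV g v := by
  have hn : toVR MV (-hpart v) = -toVR MV (hpart v) := rfl
  simp only [fgv, hpart_II, hn, map_neg]
  push_cast
  linear_combination (↑(g (toVR MV (hpart (Complex.I • v)))) : ℂ) * Complex.I_sq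

/-- The complex-linear functional built from a real functional `g`. -/
def fg (MV : MROS V) (g : VR MV →L[ℝ] ℝ) : V →ₗ[ℂ] ℂ where
  toFun := fgv MV g
  map_add' := fgv_add MV g
  map_smul' c v := by
    simp only [RingHom.id_apply]
    have hd : c • v = (c.re : ℂ) • v + (c.im : ℂ) • (Complex.I • v) := by
      rw [smul_smul, ← add_smul]
      congr 1
      simpa using (Complex.re_add_im c)
    rw [hd, fgv_add, fgv_rsmul, fgv_rsmul, fgv_Ismul]
    have hc : (c : ℂ) = (c.re : ℂ) + (c.im : ℂ) * Complex.I := by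
      simpa using (Complex.re_add_im c).symm
    nth_rewrite 3 [hc]
    rw [smul_eq_mul]
    ring

lemma fg_apply (MV : MROS V) (g : VR MV →L[ℝ] ℝ) (v : V) :
    fg MV g v = (g (toVR MV (hpart v)) : ℂ) -
      Complex.I * (g (toVR MV (hpart (Complex.I • v))) : ℂ) := rfl

lemma fg_star (MV : MROS V) (g : VR MV →L[ℝ] ℝ) (v : V) :
    fg MV g (star v) = star (fg MV g v) := by
  have hn : toVR MV (-hpart (Complex.I • v)) = -toVR MV (hpart (Complex.I • v)) := rfl
  simp only [fg_apply, hpart_star, hpart_I_star, hn, map_neg]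
  rw [Complex.star_def]
  apply Complex.ext <;> simp

lemma fg_of_sa (MV : MROS V) (g : VR MV →L[ℝ] ℝ) {v : V} (h : star v = v) :
    fg MV g v = (g (toVR MV v) : ℂ) := by
  have hz : toVR MV (0 : V) = 0 := rfl
  rw [fg_apply, hpart_of_sa h, hpart_I_of_sa h, hz, map_zero]
  simp

lemma fg_bound (MV : MROS V) (g : VR MV →L[ℝ] ℝ) (v : V) :
    ‖fg MV g v‖ ≤ 2 * ‖g‖ * nrm1 MV v := by
  rw [fg_apply]
  have h1 : ‖(g (toVR MV (hpart v)) : ℂ)‖ ≤ ‖g‖ * nrm1 MV v := by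
    rw [Complex.norm_real]
    calc ‖g (toVR MV (hpart v))‖ ≤ ‖g‖ * ‖toVR MV (hpart v)‖ := g.le_opNorm _
    _ ≤ ‖g‖ * nrm1 MV v := by
        apply mul_le_mul_of_nonneg_left _ (norm_nonneg g)
        rw [norm_toVR]
        calc nrm1 MV (hpart v) ≤ ‖(2⁻¹ : ℂ)‖ * (nrm1 MV v + nrm1 MV (star v)) := by
              rw [hpart, nrm1_smul]
              exact mul_le_mul_of_nonneg_left (nrm1_add MV _ _) (norm_nonneg _)
        _ = nrm1 MV v := by rw [nrm1_star]; norm_num; ring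
  have h2 : ‖Complex.I * (g (toVR MV (hpart (Complex.I • v))) : ℂ)‖ ≤ ‖g‖ * nrm1 MV v := by
    rw [norm_mul, Complex.norm_I, one_mul, Complex.norm_real]
    calc ‖g (toVR MV (hpart (Complex.I • v)))‖ ≤ ‖g‖ * ‖toVR MV (hpart (Complex.I • v))‖ :=
          g.le_opNorm _
    _ ≤ ‖g‖ * nrm1 MV v := by
        apply mul_le_mul_of_nonneg_left _ (norm_nonneg g)
        rw [norm_toVR]
        calc nrm1 MV (hpart (Complex.I • v))
            ≤ ‖(2⁻¹ : ℂ)‖ * (nrm1 MV (Complex.I • v) + nrm1 MV (star (Complex.I • v))) := by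
              rw [hpart, nrm1_smul]
              exact mul_le_mul_of_nonneg_left (nrm1_add MV _ _) (norm_nonneg _)
        _ = nrm1 MV v := by
              rw [nrm1_star, nrm1_smul, Complex.norm_I, one_mul]
              norm_num
              ring
  calc ‖(g (toVR MV (hpart v)) : ℂ) - Complex.I * (g (toVR MV (hpart (Complex.I • v))) : ℂ)‖
      ≤ ‖(g (toVR MV (hpart v)) : ℂ)‖ + ‖Complex.I * (g (toVR MV (hpart (Complex.I • v))) : ℂ)‖ :=
        norm_sub_le _ _
  _ ≤ 2 * ‖g‖ * nrm1 MV v := by linarith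

end StmtAux
namespace StmtAux

variable {V : Type} [AddCommGroup V] [Module ℂ V] [StarAddMonoid V]
  [StarModule ℂ V]

/-- Euclidean norm of a plain vector. -/
def nE {ι : Type} [Fintype ι] (a : ι → ℂ) : ℝ :=
  ‖(WithLp.equiv 2 (ι → ℂ)).symm a‖

lemma nE_eq {ι : Type} [Fintype ι] (a : ι → ℂ) :
    nE a = Real.sqrt (∑ i, ‖a i‖ ^ 2) := by
  rw [nE, EuclideanSpace.norm_eq]
  rfl

lemma nE_nonneg {ι : Type} [Fintype ι] (a : ι → ℂ) : 0 ≤ nE a := norm_nonneg _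

/-- Row matrix from a vector (with conjugated entries). -/
def rowC {ι : Type} (a : ι → ℂ) : Matrix PUnit ι ℂ :=
  Matrix.of fun _ i => star (a i)

/-- Column matrix from a vector. -/
def colC {ι : Type} (b : ι → ℂ) : Matrix ι PUnit ℂ :=
  Matrix.of fun j _ => b j

lemma rowC_conjTranspose {ι : Type} (a : ι → ℂ) : (rowC a)ᴴ = colC a := by
  ext j u
  simp [rowC, colC, Matrix.conjTranspose_apply]

lemma norm_pUnit (x : EuclideanSpace ℂ PUnit) : ‖x‖ = ‖x PUnit.unit‖ := by
  rw [EuclideanSpace.norm_eq]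
  rw [show (∑ i : PUnit, ‖x i‖ ^ 2) = ‖x PUnit.unit‖ ^ 2 from by simp]
  exact Real.sqrt_sq (norm_nonneg _)

lemma opN_rowC {ι : Type} [Fintype ι] [DecidableEq ι] (a : ι → ℂ) :
    opN (rowC a) ≤ nE a := by
  apply ContinuousLinearMap.opNorm_le_bound _ (nE_nonneg a)
  intro x
  rw [LinearMap.coe_toContinuousLinearMap']
  rw [Matrix.toEuclideanLin_apply]
  rw [norm_pUnit]
  have hval : (rowC a *ᵥ x.ofLp) PUnit.unit =
      inner ℂ ((WithLp.equiv 2 (ι → ℂ)).symm a) x := by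
    rw [PiLp.inner_apply]
    simp [rowC, Matrix.mulVec, dotProduct, RCLike.inner_apply']
    exact Finset.sum_congr rfl fun i _ => mul_comm _ _
  rw [show (WithLp.toLp 2 (rowC a *ᵥ x.ofLp)).ofLp PUnit.unit
      = (rowC a *ᵥ x.ofLp) PUnit.unit from rfl]
  rw [hval]
  exact norm_inner_le_norm _ _

lemma opN_colC {ι : Type} [Fintype ι] [DecidableEq ι] (b : ι → ℂ) :
    opN (colC b) ≤ nE b := by
  apply ContinuousLinearMap.opNorm_le_bound _ (nE_nonneg b)
  intro x
  rw [LinearMap.coe_toContinuousLinearMap']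
  rw [Matrix.toEuclideanLin_apply]
  have hv : colC b *ᵥ x.ofLp =
      fun j => x PUnit.unit * b j := by
    funext j
    simp [colC, Matrix.mulVec, dotProduct]
    ring
  rw [hv]
  have : (WithLp.toLp 2 (fun j => x PUnit.unit * b j))
      = x PUnit.unit • (WithLp.equiv 2 (ι → ℂ)).symm b := by
    apply (WithLp.equiv 2 (ι → ℂ)).injective
    funext j
    simp
  rw [this, norm_smul, norm_pUnit]
  exact le_of_eq (by rw [mul_comm]; rfl)

lemma sum_fin1 {M : Type} [AddCommMonoid M] {ι : Type} [Fintype ι]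
    (f : ι × Fin 1 → M) : (∑ a : ι × Fin 1, f a) = ∑ i, f (i, 0) := by
  rw [Fintype.sum_prod_type]
  congr 1
  funext i
  exact Fin.sum_univ_one _

/-- The trip pairing identity. -/
lemma trip_entry (ι : Type) [Fintype ι] [DecidableEq ι]
    (z : Matrix ι ι V) (a b : ι → ℂ) :
    trip (rowC a) z (colC b) PUnit.unit PUnit.unit
      = ∑ p, ∑ q, (star (a p) * b q) • z p q := by
  simp only [trip, mulR, mulL, Matrix.of_apply, rowC, colC]
  simp_rw [Finset.smul_sum, smul_smul]
  rw [Finset.sum_comm]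
  exact Finset.sum_congr rfl fun p _ => Finset.sum_congr rfl fun q _ => by
    rw [mul_comm]

end StmtAux
namespace StmtAux

variable {V : Type} [AddCommGroup V] [Module ℂ V] [StarAddMonoid V]
  [StarModule ℂ V]

/-- A scalar functional as a map into 1×1 matrices. -/
def toM (f : V →ₗ[ℂ] ℂ) : V →ₗ[ℂ] Matrix (Fin 1) (Fin 1) ℂ where
  toFun v := Matrix.of fun _ _ => f v
  map_add' v w := by ext i j; simp
  map_smul' c v := by ext i j; simp

lemma toM_apply (f : V →ₗ[ℂ] ℂ) (v : V) (p q : Fin 1) : toM f v p q = f v := rfl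

lemma ampS_toM_apply (f : V →ₗ[ℂ] ℂ) {ι : Type} (z : Matrix ι ι V)
    (a b : ι × Fin 1) : ampS (toM f) z a b = f (z a.1 b.1) := rfl

/-- The fundamental quadratic-form computation. -/
lemma quad_sum (f : V →ₗ[ℂ] ℂ) {ι : Type} [Fintype ι] [DecidableEq ι]
    (z : Matrix ι ι V) (c d : ι × Fin 1 → ℂ) :
    (∑ a, star (c a) * (ampS (toM f) z *ᵥ d) a)
      = f (∑ p, ∑ q, (star (c (p, 0)) * d (q, 0)) • z p q) := by
  rw [map_sum]
  rw [sum_fin1 (fun a => star (c a) * (ampS (toM f) z *ᵥ d) a)]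
  apply Finset.sum_congr rfl
  intro p _
  rw [map_sum]
  rw [show (ampS (toM f) z *ᵥ d) (p, 0) = ∑ b, ampS (toM f) z (p, 0) b * d b from rfl]
  rw [Finset.mul_sum]
  rw [sum_fin1 (fun b => star (c (p, 0)) * (ampS (toM f) z (p, 0) b * d b))]
  apply Finset.sum_congr rfl
  intro q _
  rw [_root_.map_smul, ampS_toM_apply]
  simp only [smul_eq_mul]
  ring

lemma nE_prod {ι : Type} [Fintype ι] (x : ι × Fin 1 → ℂ) :
    nE (fun i => x (i, 0)) = nE x := by
  rw [nE_eq, nE_eq, sum_fin1 (fun a => ‖x a‖ ^ 2)]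

/-- Complete boundedness of `toM f` from a norm bound on `f`. -/
lemma opN_amp_le (MV : MROS V) (f : V →ₗ[ℂ] ℂ) (Cf : ℝ) (hCf : 0 ≤ Cf)
    (hf : ∀ v, ‖f v‖ ≤ Cf * nrm1 MV v) (ι : Type) [Fintype ι] [DecidableEq ι]
    (z : Matrix ι ι V) : opN (ampS (toM f) z) ≤ Cf * MV.N ι z := by
  have hNz := N_nonneg MV ι z
  apply ContinuousLinearMap.opNorm_le_bound _ (mul_nonneg hCf hNz)
  intro x
  rw [LinearMap.coe_toContinuousLinearMap']
  rw [Matrix.toEuclideanLin_apply]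
  set M := ampS (toM f) z with hM
  set x' : ι × Fin 1 → ℂ := x.ofLp with hx'
  set w : ι × Fin 1 → ℂ := M *ᵥ x' with hw
  have hynorm : ‖WithLp.toLp 2 w‖ = nE w := rfl
  rw [hynorm]
  have hxnorm : ‖x‖ = nE x' := rfl
  rw [hxnorm]
  -- the key estimate
  have key : nE w ^ 2 ≤ Cf * MV.N ι z * (nE w * nE x') := by
    have hS : ((nE w ^ 2 : ℝ) : ℂ) = ∑ a, star (w a) * w a := by
      rw [nE_eq]
      rw [Real.sq_sqrt (Finset.sum_nonneg fun a _ => sq_nonneg _)]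
      push_cast
      apply Finset.sum_congr rfl
      intro a _
      rw [Complex.star_def, RCLike.conj_mul]
      norm_num
    have hquad := quad_sum f z w x'
    set T : V := ∑ p, ∑ q, (star (w (p, 0)) * x' (q, 0)) • z p q with hT
    have hTtrip : T = trip (rowC fun i => w (i, 0)) z (colC fun j => x' (j, 0))
        PUnit.unit PUnit.unit := by
      rw [trip_entry]
    have hbound : ‖f T‖ ≤ Cf * (nE w * MV.N ι z * nE x') := by
      calc ‖f T‖ ≤ Cf * nrm1 MV T := hf T
      _ ≤ Cf * (nE w * MV.N ι z * nE x') := by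
          apply mul_le_mul_of_nonneg_left _ hCf
          rw [nrm1_def, hTtrip, ← m1_eq]
          calc MV.N PUnit (trip (rowC fun i => w (i, 0)) z (colC fun j => x' (j, 0)))
              ≤ opN (rowC fun i => w (i, 0)) * MV.N ι z * opN (colC fun j => x' (j, 0)) :=
                MV.ruan1 _ _ _ _ _
          _ ≤ nE w * MV.N ι z * nE x' := by
              have h1 := opN_rowC (fun i => w (i, 0))
              have h2 := opN_colC (fun j => x' (j, 0))
              have h3 : opN (rowC fun i => w (i, 0)) ≤ nE w := by
                calc opN (rowC fun i => w (i, 0)) ≤ nE fun i => w (i, 0) := h1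
                _ = nE w := nE_prod w
              have h4 : opN (colC fun j => x' (j, 0)) ≤ nE x' := by
                calc opN (colC fun j => x' (j, 0)) ≤ nE fun j => x' (j, 0) := h2
                _ = nE x' := nE_prod x'
              have hop1 : (0:ℝ) ≤ opN (rowC fun i => w (i, 0)) := norm_nonneg _
              have hop2 : (0:ℝ) ≤ opN (colC fun j => x' (j, 0)) := norm_nonneg _
              exact mul_le_mul (mul_le_mul h3 le_rfl hNz (nE_nonneg w)) h4 hop2
                (mul_nonneg (nE_nonneg w) hNz)
    have heq : nE w ^ 2 = ‖f T‖ := by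
      have : ((nE w ^ 2 : ℝ) : ℂ) = f T := by rw [hS, hquad]
      have h2 := congrArg norm this
      rw [Complex.norm_real] at h2
      rw [← h2]
      exact (abs_of_nonneg (by positivity)).symm
    rw [heq]
    calc ‖f T‖ ≤ Cf * (nE w * MV.N ι z * nE x') := hbound
    _ = Cf * MV.N ι z * (nE w * nE x') := by ring
  -- conclude
  by_cases hzero : nE w = 0
  · rw [hzero]
    have : (0:ℝ) ≤ Cf * MV.N ι z * nE x' := mul_nonneg (mul_nonneg hCf hNz) (nE_nonneg x')
    linarith
  · have hpos : 0 < nE w := lt_of_le_of_ne (nE_nonneg w) (Ne.symm hzero)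
    have := key
    rw [pow_two] at this
    nlinarith [nE_nonneg x', nE_nonneg w]

end StmtAux
namespace StmtAux

variable {V : Type} [AddCommGroup V] [Module ℂ V] [StarAddMonoid V]
  [StarModule ℂ V]

/-- Admissible scalar functional: its 1×1-matrix version is completely
positive and completely bounded. -/
def Adm (MV : MROS V) (f : V →ₗ[ℂ] ℂ) : Prop :=
  IsCPs MV (toM f) ∧ IsCBs MV (toM f)

lemma isCPs_toM_fg (MV : MROS V) (g : VR MV →L[ℝ] ℝ)
    (hg : ∀ v ∈ C MV, 0 ≤ g (toVR MV v)) : IsCPs MV (toM (fg MV g)) := by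
  intro ι _ _ z hz
  refine Matrix.PosSemidef.of_dotProduct_mulVec_nonneg ?_ ?_
  · -- Hermitian
    ext a b
    have hsa : star (z b.1 a.1) = z a.1 b.1 := by
      have h := MV.pos_sa ι z hz
      have := congrFun (congrFun h a.1) b.1
      simpa [Matrix.conjTranspose_apply] using this
    show star (ampS (toM (fg MV g)) z b a) = ampS (toM (fg MV g)) z a b
    rw [ampS_toM_apply, ampS_toM_apply, ← fg_star, hsa]
  · -- quadratic form nonneg
    intro x
    have hq := quad_sum (fg MV g) z x x
    have hdot : dotProduct (star x) (ampS (toM (fg MV g)) z *ᵥ x)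
        = ∑ a, star (x a) * (ampS (toM (fg MV g)) z *ᵥ x) a := by
      simp [dotProduct]
    rw [hdot, hq]
    set T : V := ∑ p, ∑ q, (star (x (p, 0)) * x (q, 0)) • z p q with hT
    have hTC : T ∈ C MV := by
      have hcomp := MV.pos_compress PUnit ι (rowC fun i => x (i, 0)) z hz
      rw [rowC_conjTranspose] at hcomp
      have : m1 T = trip (rowC fun i => x (i, 0)) z (colC fun j => x (j, 0)) := by
        rw [m1_eq (trip _ z _), hT, ← trip_entry]
      show m1 T ∈ MV.pos PUnit
      rw [this]
      exact hcomp
    rw [fg_of_sa MV g (C_star MV hTC)]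
    rw [Complex.zero_le_real]
    exact hg T hTC

lemma isCBs_toM_fg (MV : MROS V) (g : VR MV →L[ℝ] ℝ) : IsCBs MV (toM (fg MV g)) := by
  refine ⟨2 * ‖g‖, fun ι _ _ z => ?_⟩
  exact opN_amp_le MV (fg MV g) (2 * ‖g‖) (by positivity) (fg_bound MV g) ι z

lemma adm_fg (MV : MROS V) (g : VR MV →L[ℝ] ℝ)
    (hg : ∀ v ∈ C MV, 0 ≤ g (toVR MV v)) : Adm MV (fg MV g) :=
  ⟨isCPs_toM_fg MV g hg, isCBs_toM_fg MV g⟩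

/-- Admissible functionals separate the points of `V`. -/
lemma sep_point (MV : MROS V) (x : V)
    (hx : ∀ f : V →ₗ[ℂ] ℂ, Adm MV f → f x = 0) : x = 0 := by
  have key : ∀ g : VR MV →L[ℝ] ℝ, (∀ v ∈ C MV, 0 ≤ g (toVR MV v)) →
      g (toVR MV (hpart x)) = 0 ∧ g (toVR MV (hpart (Complex.I • x))) = 0 := by
    intro g hg
    have h0 := hx (fg MV g) (adm_fg MV g hg)
    rw [fg_apply] at h0
    have hre := congrArg Complex.re h0
    have him := congrArg Complex.im h0
    simp [Complex.sub_re, Complex.sub_im, Complex.mul_re, Complex.mul_im] at hre him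
    constructor
    · exact hre
    · exact him
  have h1 : hpart x = 0 :=
    sep_sa MV (hpart x) (hpart_sa x) (fun g hg => (key g hg).1)
  have h2 : hpart (Complex.I • x) = 0 :=
    sep_sa MV (hpart (Complex.I • x)) (hpart_sa _) (fun g hg => (key g hg).2)
  -- deduce x = 0
  have e1 : x + star x = 0 := by
    have := h1
    rw [hpart] at this
    rcases smul_eq_zero.mp this with h | h
    · norm_num at h
    · exact h
  have e2 : Complex.I • x - Complex.I • star x = 0 := by
    have := h2
    rw [hpart] at this
    rcases smul_eq_zero.mp this with h | h
    · norm_num at h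
    · rw [star_smul, Complex.star_def, Complex.conj_I, neg_smul] at h
      rw [sub_eq_add_neg]
      exact h
  have e3 : x - star x = 0 := by
    have : Complex.I • (x - star x) = 0 := by
      rw [smul_sub]
      exact e2
    rcases smul_eq_zero.mp this with h | h
    · exact absurd h Complex.I_ne_zero
    · exact h
  apply two_smul_eq_zero (v := x)
  rw [two_smul]
  calc x + x = (x + star x) + (x - star x) := by abel
  _ = 0 := by rw [e1, e3, add_zero]

end StmtAux
namespace StmtAux

lemma psd_neg_eq_zero {ι : Type} [Fintype ι] [DecidableEq ι] {M : Matrix ι ι ℂ}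
    (h1 : M.PosSemidef) (h2 : (-M).PosSemidef) : M = 0 := by
  have hq : ∀ x : ι → ℂ, dotProduct (star x) (M *ᵥ x) = 0 := by
    intro x
    refine le_antisymm ?_ (h1.dotProduct_mulVec_nonneg x)
    have h := h2.dotProduct_mulVec_nonneg x
    rw [Matrix.neg_mulVec, dotProduct_neg] at h
    exact neg_nonneg.mp h
  have hT : Matrix.toEuclideanLin M = 0 := by
    rw [← inner_map_self_eq_zero]
    intro x
    have hc : (inner ℂ (Matrix.toEuclideanLin M x) x : ℂ)
        = star (dotProduct (star ((WithLp.equiv 2 (ι → ℂ)) x))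
            (M *ᵥ ((WithLp.equiv 2 (ι → ℂ)) x))) := by
      rw [PiLp.inner_apply, dotProduct, star_sum]
      apply Finset.sum_congr rfl
      intro i _
      rw [RCLike.inner_apply', StarMul.star_mul, Pi.star_apply, star_star]
      rfl
    rw [hc, hq, star_zero]
  exact (LinearEquiv.map_eq_zero_iff Matrix.toEuclideanLin).mp hT

section tensorsep

variable {V W : Type} [AddCommGroup V] [Module ℂ V] [StarAddMonoid V]
  [StarModule ℂ V] [AddCommGroup W] [Module ℂ W] [StarAddMonoid W]
  [StarModule ℂ W]

/-- Contraction of the right factor by a functional. -/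
def Lg (g : W →ₗ[ℂ] ℂ) : V ⊗[ℂ] W →ₗ[ℂ] V :=
  TensorProduct.lift (LinearMap.mk₂ ℂ (fun v w => g w • v)
    (fun v v' w => by simp [smul_add])
    (fun c v w => by exact smul_comm _ _ _)
    (fun v w w' => by simp [map_add, add_smul])
    (fun c v w => by simp only [_root_.map_smul, smul_eq_mul]; exact mul_smul _ _ _))

lemma Lg_tmul (g : W →ₗ[ℂ] ℂ) (v : V) (w : W) :
    Lg g (v ⊗ₜ[ℂ] w) = g w • v := rfl

lemma pairMap_toM_apply (f : V →ₗ[ℂ] ℂ) (g : W →ₗ[ℂ] ℂ) (t : V ⊗[ℂ] W)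
    (a b : Fin 1 × Fin 1) :
    pairMap (toM f) (toM g) t a b = f (Lg g t) := by
  induction t using TensorProduct.induction_on with
  | zero => simp
  | tmul v w =>
      rw [Lg_tmul, _root_.map_smul, smul_eq_mul]
      show (Matrix.of fun a b => toM f v a.1 b.1 * toM g w a.2 b.2) a b = _
      rw [Matrix.of_apply, toM_apply, toM_apply]
      ring
  | add s u hs hu =>
      rw [map_add, map_add, map_add, Matrix.add_apply, hs, hu]

/-- Tensor separation. -/
lemma tensor_sep (SW : (W →ₗ[ℂ] ℂ) → Prop)
    (hW : ∀ w : W, (∀ g, SW g → g w = 0) → w = 0)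
    (t : V ⊗[ℂ] W) (h : ∀ g, SW g → Lg (V := V) g t = 0) : t = 0 := by
  classical
  let bV := Module.Basis.ofVectorSpace ℂ V
  let E : (V ⊗[ℂ] W) ≃ₗ[ℂ] (Module.Basis.ofVectorSpaceIndex ℂ V →₀ W) :=
    (TensorProduct.congr bV.repr (LinearEquiv.refl ℂ W)).trans
      (TensorProduct.finsuppScalarLeft ℂ W _)
  have key : ∀ (g : W →ₗ[ℂ] ℂ) (a : Module.Basis.ofVectorSpaceIndex ℂ V) (s : V ⊗[ℂ] W),
      g (E s a) = bV.repr (Lg g s) a := by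
    intro g a s
    induction s using TensorProduct.induction_on with
    | zero => simp
    | tmul v w =>
        have hE : E (v ⊗ₜ[ℂ] w) a = bV.repr v a • w := by
          show (TensorProduct.finsuppScalarLeft ℂ W _)
            ((TensorProduct.congr bV.repr (LinearEquiv.refl ℂ W)) (v ⊗ₜ[ℂ] w)) a = _
          rw [TensorProduct.congr_tmul]
          rw [TensorProduct.finsuppScalarLeft_apply_tmul_apply]
          rfl
        rw [hE, Lg_tmul, _root_.map_smul, _root_.map_smul]
        rw [smul_eq_mul, Finsupp.smul_apply, smul_eq_mul]
        ring
    | add s u hs hu =>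
        rw [map_add, map_add, Finsupp.add_apply, map_add, hs, hu]
        rw [map_add, Finsupp.add_apply]
  have hEt : E t = 0 := by
    apply Finsupp.ext
    intro a
    rw [Finsupp.zero_apply]
    apply hW
    intro g hg
    rw [key g a t, h g hg, map_zero]
    rfl
  exact (LinearEquiv.map_eq_zero_iff E).mp hEt

end tensorsep

end StmtAux

/-- The cone `M_ι(V ⊗_δ W)_+` is proper. -/
theorem stmt_5 {V W : Type} [AddCommGroup V] [Module ℂ V] [StarAddMonoid V]
    [StarModule ℂ V] [AddCommGroup W] [Module ℂ W] [StarAddMonoid W]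
    [StarModule ℂ W] [StarAddMonoid (V ⊗[ℂ] W)] [StarModule ℂ (V ⊗[ℂ] W)]
    (hst : ∀ (v : V) (w : W), star (v ⊗ₜ[ℂ] w) = star v ⊗ₜ[ℂ] star w)
    (MV : MROS V) (MW : MROS W)
    (ι : Type) [Fintype ι] [DecidableEq ι] (z : Matrix ι ι (V ⊗[ℂ] W))
    (h1 : z ∈ deltaPos MV MW ι) (h2 : -z ∈ deltaPos MV MW ι) : z = 0 := by
  classical
  ext i j
  show z i j = (0 : Matrix ι ι (V ⊗[ℂ] W)) i j
  rw [Matrix.zero_apply]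
  apply StmtAux.tensor_sep (StmtAux.Adm MW) (fun w hw => StmtAux.sep_point MW w hw)
  intro g hg
  apply StmtAux.sep_point MV
  intro f hf
  have hM := h1 1 1 (StmtAux.toM f) (StmtAux.toM g) hf.1 hf.2 hg.1 hg.2
  have hM2 := h2 1 1 (StmtAux.toM f) (StmtAux.toM g) hf.1 hf.2 hg.1 hg.2
  have hneg : ampS (pairMap (StmtAux.toM f) (StmtAux.toM g)) (-z)
      = -(ampS (pairMap (StmtAux.toM f) (StmtAux.toM g)) z) := by
    ext a b
    show pairMap (StmtAux.toM f) (StmtAux.toM g) ((-z) a.1 b.1) a.2 b.2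
      = -(pairMap (StmtAux.toM f) (StmtAux.toM g) (z a.1 b.1) a.2 b.2)
    rw [Matrix.neg_apply, map_neg, Matrix.neg_apply]
  rw [hneg] at hM2
  have hzero := StmtAux.psd_neg_eq_zero hM hM2
  have hentry := congrFun (congrFun hzero (i, ((0 : Fin 1), (0 : Fin 1))))
    (j, ((0 : Fin 1), (0 : Fin 1)))
  rw [Matrix.zero_apply] at hentry
  have : pairMap (StmtAux.toM f) (StmtAux.toM g) (z i j)
      ((0 : Fin 1), (0 : Fin 1)) ((0 : Fin 1), (0 : Fin 1)) = 0 := hentry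
  rw [StmtAux.pairMap_toM_apply] at this
  exact this
end
end
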